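/- arXiv:1303.1643 — 6 statements merged into one kernel-verified Lean document; each statement's English description precedes it below -/
import Mathlib

section
/- A finite graph G is an interval graph if and only if G has no induced cycle of length 4 and the complement of G is a comparability graph. -/
/-- A binary matrix (rows `R`, columns `Fin n`, entries in `Bool`) has the
consecutive ones property: some permutation of the columns makes the ones in
every row consecutive. -/
def HasCOP {R : Type*} {n : ℕ} (M : R → Fin n → Bool) : Prop :=
  ∃ σ : Equiv.Perm (Fin n), ∀ (i : R) (a b c : Fin n), a ≤ b → b ≤ c →
    M i (σ a) = true → M i (σ c) = true → M i (σ b) = true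

/-- The set `S_i` of columns having a `1` in row `i`. -/
def rowSet {R : Type*} {n : ℕ} (M : R → Fin n → Bool) (i : R) : Set (Fin n) :=
  {j | M i j = true}

/-- The set `S_i` of columns having a `1` in row `i`, as a `Finset`. -/
def rowFinset {R : Type*} {n : ℕ} (M : R → Fin n → Bool) (i : R) : Finset (Fin n) :=
  Finset.univ.filter (fun j => M i j = true)

/-- `vert(c_k)`: vertices (rows) having a `1` in column `k`. -/
def vert {R : Type*} {n : ℕ} (M : R → Fin n → Bool) (k : Fin n) : Set R :=
  {i | M i k = true}

/-- The submatrix `M \ D` obtained by deleting the rows in `D`. -/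
def delRows {R : Type*} {n : ℕ} (M : R → Fin n → Bool) (D : Set R) :
    {i : R // i ∉ D} → Fin n → Bool :=
  fun i j => M i.1 j

/-- `M̃`: the `(n+m) × n` matrix obtained by stacking the `n × n` identity
matrix on top of `M`. -/
def augMatrix {m n : ℕ} (M : Fin m → Fin n → Bool) : Fin (n + m) → Fin n → Bool :=
  fun i j => Fin.addCases (fun i' : Fin n => decide (i' = j)) (fun i' : Fin m => M i' j) i

/-- The derived graph `G(M)`: one vertex per row, two distinct rows adjacent
iff some column has a `1` in both. -/
def derivedGraph {R : Type*} {n : ℕ} (M : R → Fin n → Bool) : SimpleGraph R where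
  Adj i j := i ≠ j ∧ ∃ k, M i k = true ∧ M j k = true
  symm := by
    constructor
    rintro i j ⟨hne, k, h1, h2⟩
    exact ⟨hne.symm, k, h2, h1⟩
  loopless := by constructor; rintro i ⟨h, -⟩; exact h rfl

/-- An interval graph: vertices can be assigned nonempty real intervals so
that distinct vertices are adjacent iff their intervals intersect. -/
def IsIntervalGraph {V : Type*} (G : SimpleGraph V) : Prop :=
  ∃ I : V → Set ℝ, (∀ v, (I v).Nonempty ∧ (I v).OrdConnected) ∧
    ∀ u v : V, u ≠ v → (G.Adj u v ↔ (I u ∩ I v).Nonempty)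

/-- A maximal clique: a clique not properly contained in another clique. -/
def IsMaximalClique {V : Type*} (G : SimpleGraph V) (Q : Set V) : Prop :=
  G.IsClique Q ∧ ∀ Q' : Set V, G.IsClique Q' → Q ⊆ Q' → Q' = Q

/-- A maximal clique of the induced subgraph `G[X]` (viewed as a set of
vertices of `G` contained in `X`). -/
def IsMaximalCliqueOn {V : Type*} (G : SimpleGraph V) (X Q : Set V) : Prop :=
  Q ⊆ X ∧ G.IsClique Q ∧ ∀ Q' : Set V, Q' ⊆ X → G.IsClique Q' → Q ⊆ Q' → Q' = Q

/-- `N` is the clique matrix of `G`: its columns are pairwise distinct and the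
column sets are exactly the maximal cliques of `G`. -/
def IsCliqueMatrix {V C : Type*} (G : SimpleGraph V) (N : V → C → Bool) : Prop :=
  Function.Injective (fun j : C => fun i : V => N i j) ∧
  ∀ Q : Set V, IsMaximalClique G Q ↔ ∃ j : C, Q = {i | N i j = true}

/-- An intersection cardinality preserving interval assignment: each row set
`S_i` gets an integer interval `[a i, b i]` with `|S_i ∩ S_j| = |I_i ∩ I_j|`
for all pairs `i, j`. -/
def IsICPIA {m n : ℕ} (M : Fin m → Fin n → Bool) (a b : Fin m → ℤ) : Prop :=
  ∀ i j : Fin m,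
    (rowFinset M i ∩ rowFinset M j).card =
    (Finset.Icc (a i) (b i) ∩ Finset.Icc (a j) (b j)).card

/-- `c` is an induced cycle of length `l` inside the induced subgraph `G[X]`:
`l ≥ 3` distinct vertices of `X`, cyclically consecutive ones adjacent, and
non-consecutive ones non-adjacent. -/
def IsInducedCycleOn {V : Type*} (G : SimpleGraph V) (X : Set V) (l : ℕ) (c : Fin l → V) : Prop :=
  3 ≤ l ∧ Function.Injective c ∧ (∀ i, c i ∈ X) ∧
  ∀ i j : Fin l, i ≠ j →
    (G.Adj (c i) (c j) ↔ (j.val = (i.val + 1) % l ∨ i.val = (j.val + 1) % l))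

/-- `G` has an induced cycle of length 4. -/
def HasInducedC4 {V : Type*} (G : SimpleGraph V) : Prop :=
  ∃ v1 v2 v3 v4 : V, v1 ≠ v2 ∧ v1 ≠ v3 ∧ v1 ≠ v4 ∧ v2 ≠ v3 ∧ v2 ≠ v4 ∧ v3 ≠ v4 ∧
    G.Adj v1 v2 ∧ G.Adj v2 v3 ∧ G.Adj v3 v4 ∧ G.Adj v4 v1 ∧ ¬ G.Adj v1 v3 ∧ ¬ G.Adj v2 v4

/-- A comparability graph: some partial order on the vertices makes distinct
vertices adjacent iff they are comparable. -/
def IsComparabilityGraph {V : Type*} (G : SimpleGraph V) : Prop :=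
  ∃ p : PartialOrder V, ∀ u v : V, u ≠ v → (G.Adj u v ↔ (p.le u v ∨ p.le v u))

section GHhelpers

open Set

/-- Two disjoint nonempty order-connected sets of reals are totally separated. -/
lemma GH_sep {A B : Set ℝ} (hA : A.OrdConnected) (hB : B.OrdConnected)
    (hd : ∀ x, x ∈ A → x ∉ B) {a b : ℝ} (ha : a ∈ A) (hb : b ∈ B) (hab : a < b) :
    ∀ x ∈ A, ∀ y ∈ B, x < y := by
  intro x hx y hy
  rcases lt_or_ge x y with h | h
  · exact h
  exfalso
  rcases le_or_gt a y with h1 | h1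
  · exact hd y (hA.out ha hx ⟨h1, h⟩) hy
  · exact hd a ha (hB.out hy hb ⟨h1.le, hab.le⟩)

lemma GH_meet {I1 I2 I3 I4 : Set ℝ} (h13 : ∀ x ∈ I1, ∀ y ∈ I3, x < y)
    (oc2 : I2.OrdConnected) (oc4 : I4.OrdConnected)
    {p q r s : ℝ} (hp1 : p ∈ I1) (hp2 : p ∈ I2) (hq3 : q ∈ I3) (hq2 : q ∈ I2)
    (hr1 : r ∈ I1) (hr4 : r ∈ I4) (hs3 : s ∈ I3) (hs4 : s ∈ I4) :
    (I2 ∩ I4).Nonempty :=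
  ⟨max p r,
    oc2.out hp2 hq2 ⟨le_max_left _ _, max_le (h13 p hp1 q hq3).le (h13 r hr1 q hq3).le⟩,
    oc4.out hr4 hs4 ⟨le_max_right _ _, max_le (h13 p hp1 s hs3).le (h13 r hr1 s hs3).le⟩⟩

end GHhelpers

section GHsetup

variable {V : Type*}

/-- Bundled hypotheses for the hard direction of Gilmore–Hoffman. -/
structure GHSetup (G : SimpleGraph V) (r : V → V → Prop) : Prop where
  ne : ∀ {u v}, r u v → u ≠ v
  nadj : ∀ {u v}, r u v → ¬ G.Adj u v
  total : ∀ {u v}, u ≠ v → ¬ G.Adj u v → r u v ∨ r v u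
  asymm : ∀ {u v}, r u v → ¬ r v u
  trans : ∀ {u v w}, r u v → r v w → r u w
  noC4 : ¬ HasInducedC4 G

variable {G : SimpleGraph V} {r : V → V → Prop}

lemma GHSetup.clique_not_r (h : GHSetup G r) {Q : Set V} (hQ : G.IsClique Q)
    {x y : V} (hx : x ∈ Q) (hy : y ∈ Q) : ¬ r x y :=
  fun hr => h.nadj hr (hQ hx hy (h.ne hr))

lemma GH_exists_maximal_clique {s : Set V} (hs : G.IsClique s) :
    ∃ Q, IsMaximalClique G Q ∧ s ⊆ Q := by
  have hchaincond : ∀ c ⊆ {Q | G.IsClique Q}, IsChain (· ⊆ ·) c → c.Nonempty →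
      ∃ ub ∈ {Q | G.IsClique Q}, ∀ t ∈ c, t ⊆ ub := by
    intro c hcS hchain _
    refine ⟨⋃₀ c, ?_, fun t ht => Set.subset_sUnion_of_mem ht⟩
    intro x hx y hy hxy
    obtain ⟨A, hA, hxA⟩ := hx
    obtain ⟨B, hB, hyB⟩ := hy
    rcases hchain.total hA hB with hAB | hAB
    · exact hcS hB (hAB hxA) hyB hxy
    · exact hcS hA hxA (hAB hyB) hxy
  obtain ⟨m, hsm, hm⟩ := zorn_subset_nonempty {Q | G.IsClique Q} hchaincond s hs
  exact ⟨m, ⟨hm.prop, fun Q' hQ' hmQ' => subset_antisymm (hm.2 hQ' hmQ') hmQ'⟩, hsm⟩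

lemma GH_mem_maximal_clique (v : V) : ∃ Q, IsMaximalClique G Q ∧ v ∈ Q := by
  obtain ⟨Q, hQ, hvQ⟩ := GH_exists_maximal_clique (G := G) (s := {v})
    (by simp [SimpleGraph.isClique_iff, Set.pairwise_singleton])
  exact ⟨Q, hQ, hvQ rfl⟩

lemma GH_maximal_nonadj {A : Set V} (hA : IsMaximalClique G A) {v : V} (hv : v ∉ A) :
    ∃ b ∈ A, b ≠ v ∧ ¬ G.Adj v b := by
  by_contra hcon
  push_neg at hcon
  have hclique : G.IsClique (insert v A) := by
    intro x hx y hy hxy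
    rcases hx with rfl | hx
    · rcases hy with rfl | hy
      · exact absurd rfl hxy
      · exact hcon y hy (fun e => hv (e ▸ hy))
    · rcases hy with rfl | hy
      · exact (hcon x hx (fun e => hv (e ▸ hx))).symm
      · exact hA.1 hx hy hxy
  have heq := hA.2 _ hclique (Set.subset_insert _ _)
  exact hv (heq ▸ Set.mem_insert v A)

/-- The relation on maximal cliques. -/
def GHRel (r : V → V → Prop) (A B : Set V) : Prop := ∃ a ∈ A, ∃ b ∈ B, r a b

lemma GHSetup.rel_asymm (h : GHSetup G r) {A B : Set V}
    (hA : IsMaximalClique G A) (hB : IsMaximalClique G B) :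
    GHRel r A B → ¬ GHRel r B A := by
  rintro ⟨a1, ha1, b1, hb1, hab⟩ ⟨b2, hb2, a2, ha2, hba⟩
  by_cases h12 : a1 = a2
  · subst h12
    exact h.clique_not_r hB.1 hb2 hb1 (h.trans hba hab)
  by_cases hbb : b1 = b2
  · subst hbb
    exact h.clique_not_r hA.1 ha1 ha2 (h.trans hab hba)
  -- all four distinct, derive an induced C4
  have hA12 : G.Adj a1 a2 := hA.1 ha1 ha2 h12
  have hB12 : G.Adj b1 b2 := hB.1 hb1 hb2 hbb
  have hne12 : a1 ≠ b2 := by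
    rintro rfl
    exact h.clique_not_r hA.1 ha1 ha2 hba
  have hE1 : G.Adj a1 b2 := by
    by_contra hnadj
    rcases h.total hne12 hnadj with hr1 | hr1
    · exact h.clique_not_r hA.1 ha1 ha2 (h.trans hr1 hba)
    · exact h.clique_not_r hB.1 hb2 hb1 (h.trans hr1 hab)
  have hne21 : a2 ≠ b1 := by
    rintro rfl
    exact h.clique_not_r hA.1 ha1 ha2 hab
  have hE2 : G.Adj a2 b1 := by
    by_contra hnadj
    rcases h.total hne21 hnadj with hr1 | hr1
    · exact h.clique_not_r hB.1 hb2 hb1 (h.trans hba hr1)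
    · exact h.clique_not_r hA.1 ha1 ha2 (h.trans hab hr1)
  exact h.noC4 ⟨a1, b2, b1, a2, hne12, h.ne hab, Ne.symm (G.ne_of_adj hA12).symm,
    Ne.symm hbb, h.ne hba, Ne.symm hne21,
    hE1, hB12.symm, hE2.symm, hA12.symm, h.nadj hab, h.nadj hba⟩

lemma GHSetup.rel_total (h : GHSetup G r) {A B : Set V}
    (hA : IsMaximalClique G A) (hB : IsMaximalClique G B) (hne : A ≠ B) :
    GHRel r A B ∨ GHRel r B A := by
  have hns : ¬ A ⊆ B := fun hsub => hne (hA.2 B hB.1 hsub).symm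
  obtain ⟨a, haA, haB⟩ := Set.not_subset.mp hns
  obtain ⟨b, hbB, hba, hnadj⟩ := GH_maximal_nonadj hB haB
  rcases h.total hba.symm hnadj with hr1 | hr1
  · exact Or.inl ⟨a, haA, b, hbB, hr1⟩
  · exact Or.inr ⟨b, hbB, a, haA, hr1⟩

lemma GHSetup.rel_succ (h : GHSetup G r) {A B : Set V}
    (hA : IsMaximalClique G A) (hB : IsMaximalClique G B)
    (hAB : GHRel r A B) {b : V} (hbB : b ∈ B) (hbA : b ∉ A) :
    ∃ a ∈ A, r a b := by
  by_contra hcon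
  push_neg at hcon
  obtain ⟨a1, ha1, b1, hb1, h1⟩ := hAB
  obtain ⟨a0, ha0, ha0b, hnadj0⟩ := GH_maximal_nonadj hA hbA
  -- hnadj0 : ¬ G.Adj b a0
  have hrba0 : r b a0 := by
    rcases h.total (Ne.symm ha0b) hnadj0 with hr1 | hr1
    · exact hr1
    · exact absurd hr1 (by intro hx; exact hcon a0 ha0 hx)
  have hbb1 : b ≠ b1 := by
    rintro rfl
    exact hcon a1 ha1 h1
  have ha1b : a1 ≠ b := fun e => hbA (e ▸ ha1)
  have hAdj_a1b : G.Adj a1 b := by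
    by_contra hnadj
    rcases h.total ha1b hnadj with hr1 | hr1
    · exact hcon a1 ha1 hr1
    · exact h.clique_not_r hB.1 hbB hb1 (h.trans hr1 h1)
  have ha0b1 : a0 ≠ b1 := by
    rintro rfl
    exact h.clique_not_r hA.1 ha1 ha0 h1
  have hAdj_a0b1 : G.Adj a0 b1 := by
    by_contra hnadj
    rcases h.total ha0b1 hnadj with hr1 | hr1
    · exact h.clique_not_r hB.1 hbB hb1 (h.trans hrba0 hr1)
    · exact h.clique_not_r hA.1 ha1 ha0 (h.trans h1 hr1)
  have ha1a0 : a1 ≠ a0 := by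
    rintro rfl
    exact h.clique_not_r hB.1 hbB hb1 (h.trans hrba0 h1)
  -- induced C4 on a1, b, b1, a0
  exact h.noC4 ⟨a1, b, b1, a0, ha1b, h.ne h1, ha1a0, hbb1, h.ne hrba0, Ne.symm ha0b1,
    hAdj_a1b, hB.1 hbB hb1 hbb1, hAdj_a0b1.symm, hA.1 ha0 ha1 (Ne.symm ha1a0), h.nadj h1, hnadj0⟩

lemma GHSetup.rel_trans (h : GHSetup G r) {A B C : Set V}
    (hA : IsMaximalClique G A) (hB : IsMaximalClique G B) (hC : IsMaximalClique G C)
    (hAB : GHRel r A B) (hBC : GHRel r B C) : GHRel r A C := by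
  obtain ⟨b0, hb0, c0, hc0, hbc⟩ := hBC
  by_cases hb0A : b0 ∈ A
  · exact ⟨b0, hb0A, c0, hc0, hbc⟩
  · obtain ⟨a, haA, har⟩ := h.rel_succ hA hB hAB hb0 hb0A
    exact ⟨a, haA, c0, hc0, h.trans har hbc⟩

lemma GHSetup.rel_between (h : GHSetup G r) {A B C : Set V}
    (hA : IsMaximalClique G A) (hB : IsMaximalClique G B) (hC : IsMaximalClique G C)
    (hAB : GHRel r A B) (hBC : GHRel r B C) {v : V} (hvA : v ∈ A) (hvC : v ∈ C) :
    v ∈ B := by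
  by_contra hvB
  obtain ⟨b, hbB, hbv, hnadj⟩ := GH_maximal_nonadj hB hvB
  rcases h.total (Ne.symm hbv) hnadj with hr1 | hr1
  · exact h.rel_asymm hB hC hBC ⟨v, hvC, b, hbB, hr1⟩
  · exact h.rel_asymm hA hB hAB ⟨b, hbB, v, hvA, hr1⟩

/-- The type of maximal cliques. -/
def GHMC (G : SimpleGraph V) := {Q : Set V // IsMaximalClique G Q}

/-- The linear order on maximal cliques induced by a transitive orientation of
the complement. -/
noncomputable def GHorder (h : GHSetup G r) : LinearOrder (GHMC G) where
  le A B := A = B ∨ GHRel r A.1 B.1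
  le_refl A := Or.inl rfl
  le_trans := by
    rintro A B C (rfl | h1) h2
    · exact h2
    rcases h2 with rfl | h2
    · exact Or.inr h1
    · exact Or.inr (h.rel_trans A.2 B.2 C.2 h1 h2)
  le_antisymm := by
    rintro A B (rfl | h1) h2
    · rfl
    rcases h2 with rfl | h2
    · rfl
    · exact absurd h2 (h.rel_asymm A.2 B.2 h1)
  le_total := by
    intro A B
    by_cases hAB : A = B
    · exact Or.inl (Or.inl hAB)
    rcases h.rel_total A.2 B.2 (fun e => hAB (Subtype.ext e)) with h1 | h1
    · exact Or.inl (Or.inr h1)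
    · exact Or.inr (Or.inr h1)
  toDecidableLE := fun A B => Classical.dec _

lemma GH_backward [Fintype V] (h : GHSetup G r) : IsIntervalGraph G := by
  classical
  letI : LinearOrder (GHMC G) := GHorder h
  haveI : Finite (GHMC G) := Subtype.finite
  haveI : Fintype (GHMC G) := Fintype.ofFinite _
  have hle_iff : ∀ A B : GHMC G, A ≤ B ↔ (A = B ∨ GHRel r A.1 B.1) := fun A B => Iff.rfl
  set iso := (Fintype.orderIsoFinOfCardEq (GHMC G) rfl).symm with hiso
  set f : GHMC G → ℝ := fun A => ((iso A : Fin _) : ℕ) with hfdef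
  have hf : StrictMono f := by
    intro A B hAB
    simp only [hfdef]
    exact_mod_cast Fin.lt_iff_val_lt_val.mp (iso.strictMono hAB)
  set T : V → Finset ℝ := fun v => (Finset.univ.filter (fun A : GHMC G => v ∈ A.1)).image f
    with hTdef
  have hmem : ∀ (v : V) (A : GHMC G), v ∈ A.1 → f A ∈ T v := fun v A hvA =>
    Finset.mem_image_of_mem f (Finset.mem_filter.mpr ⟨Finset.mem_univ _, hvA⟩)
  have hTne : ∀ v, (T v).Nonempty := by
    intro v
    obtain ⟨Q, hQ, hvQ⟩ := GH_mem_maximal_clique (G := G) v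
    exact ⟨f ⟨Q, hQ⟩, hmem v ⟨Q, hQ⟩ hvQ⟩
  refine ⟨fun v => Set.Icc ((T v).min' (hTne v)) ((T v).max' (hTne v)), ?_, ?_⟩
  · intro v
    exact ⟨Set.nonempty_Icc.mpr ((T v).min'_le _ ((T v).max'_mem (hTne v))),
      Set.ordConnected_Icc⟩
  have key : ∀ u v : V, u ≠ v →
      (T u).min' (hTne u) ≤ (T v).min' (hTne v) →
      (T v).min' (hTne v) ≤ (T u).max' (hTne u) → G.Adj u v := by
    intro u v huv hle1 hle2
    obtain ⟨Qv, hQvmem, hQv⟩ := Finset.mem_image.mp ((T v).min'_mem (hTne v))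
    obtain ⟨Q1, hQ1mem, hQ1⟩ := Finset.mem_image.mp ((T u).min'_mem (hTne u))
    obtain ⟨Q2, hQ2mem, hQ2⟩ := Finset.mem_image.mp ((T u).max'_mem (hTne u))
    have hvQv : v ∈ Qv.1 := (Finset.mem_filter.mp hQvmem).2
    have huQ1 : u ∈ Q1.1 := (Finset.mem_filter.mp hQ1mem).2
    have huQ2 : u ∈ Q2.1 := (Finset.mem_filter.mp hQ2mem).2
    have h1 : Q1 ≤ Qv := hf.le_iff_le.mp (by rw [hQ1, hQv]; exact hle1)
    have h2 : Qv ≤ Q2 := hf.le_iff_le.mp (by rw [hQv, hQ2]; exact hle2)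
    have huQv : u ∈ Qv.1 := by
      rcases (hle_iff Q1 Qv).mp h1 with e | h1'
      · exact e ▸ huQ1
      rcases (hle_iff Qv Q2).mp h2 with e | h2'
      · exact e.symm ▸ huQ2
      · exact h.rel_between Q1.2 Qv.2 Q2.2 h1' h2' huQ1 huQ2
    exact Qv.2.1 huQv hvQv huv
  intro u v huv
  constructor
  · intro hadj
    have hcl : G.IsClique {u, v} := by
      rw [SimpleGraph.isClique_iff]
      exact Set.pairwise_pair.mpr (fun _ => ⟨hadj, hadj.symm⟩)
    obtain ⟨Q, hQ, hsub⟩ := GH_exists_maximal_clique hcl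
    have hu : u ∈ Q := hsub (by simp)
    have hv : v ∈ Q := hsub (by simp)
    exact ⟨f ⟨Q, hQ⟩,
      ⟨Finset.min'_le _ _ (hmem u ⟨Q, hQ⟩ hu), Finset.le_max' _ _ (hmem u ⟨Q, hQ⟩ hu)⟩,
      ⟨Finset.min'_le _ _ (hmem v ⟨Q, hQ⟩ hv), Finset.le_max' _ _ (hmem v ⟨Q, hQ⟩ hv)⟩⟩
  · rintro ⟨x, ⟨hxu1, hxu2⟩, hxv1, hxv2⟩
    rcases le_total ((T u).min' (hTne u)) ((T v).min' (hTne v)) with hle | hle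
    · exact key u v huv hle (hxv1.trans hxu2)
    · exact (key v u huv.symm hle (hxu1.trans hxv2)).symm

end GHsetup

/-- A finite graph is an interval graph iff it has no induced
cycle of length 4 and its complement is a comparability graph. -/
theorem stmt1 {V : Type*} [Fintype V] (G : SimpleGraph V) :
    IsIntervalGraph G ↔ ¬ HasInducedC4 G ∧ IsComparabilityGraph Gᶜ := by
  classical
  constructor
  · rintro ⟨I, hI, hadj⟩
    constructor
    · rintro ⟨v1, v2, v3, v4, h12, h13, h14, h23, h24, h34, a12, a23, a34, a41, n13, n24⟩
      have hdisj : ∀ x, x ∈ I v1 → x ∉ I v3 := by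
        intro x hx1 hx3
        exact n13 ((hadj v1 v3 h13).mpr ⟨x, hx1, hx3⟩)
      obtain ⟨p, hp1, hp2⟩ := (hadj v1 v2 h12).mp a12
      obtain ⟨q, hq2, hq3⟩ := (hadj v2 v3 h23).mp a23
      obtain ⟨s, hs3, hs4⟩ := (hadj v3 v4 h34).mp a34
      obtain ⟨t, ht4, ht1⟩ := (hadj v4 v1 h14.symm).mp a41
      have hps : p ≠ s := fun e => hdisj p hp1 (e ▸ hs3)
      rcases hps.lt_or_gt with hlt | hlt
      · have hsep := GH_sep (hI v1).2 (hI v3).2 hdisj hp1 hs3 hlt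
        exact n24 ((hadj v2 v4 h24).mpr
          (GH_meet hsep (hI v2).2 (hI v4).2 hp1 hp2 hq3 hq2 ht1 ht4 hs3 hs4))
      · have hsep := GH_sep (hI v3).2 (hI v1).2 (fun x hx3 hx1 => hdisj x hx1 hx3) hs3 hp1 hlt
        exact n24 ((hadj v2 v4 h24).mpr
          (GH_meet hsep (hI v2).2 (hI v4).2 hq3 hq2 hp1 hp2 hs3 hs4 ht1 ht4))
    · refine ⟨{ le := fun u v => u = v ∨ ∀ x ∈ I u, ∀ y ∈ I v, x < y,
                le_refl := fun u => Or.inl rfl,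
                le_trans := ?_, le_antisymm := ?_ }, ?_⟩
      · rintro u v w (rfl | h1) h2
        · exact h2
        rcases h2 with rfl | h2
        · exact Or.inr h1
        · refine Or.inr (fun x hx y hy => ?_)
          obtain ⟨z, hz⟩ := (hI v).1
          exact (h1 x hx z hz).trans (h2 z hz y hy)
      · rintro u v (rfl | h1) h2
        · rfl
        rcases h2 with rfl | h2
        · rfl
        · obtain ⟨x, hx⟩ := (hI u).1
          obtain ⟨y, hy⟩ := (hI v).1
          exact absurd (h1 x hx y hy) (lt_asymm (h2 y hy x hx))
      · intro u v huv
        rw [SimpleGraph.compl_adj]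
        constructor
        · rintro ⟨-, hnadj⟩
          have hdisj : ∀ x, x ∈ I u → x ∉ I v := by
            intro x hx1 hx2
            exact hnadj ((hadj u v huv).mpr ⟨x, hx1, hx2⟩)
          obtain ⟨x0, hx0⟩ := (hI u).1
          obtain ⟨y0, hy0⟩ := (hI v).1
          have hne : x0 ≠ y0 := fun e => hdisj x0 hx0 (e ▸ hy0)
          rcases hne.lt_or_gt with hlt | hlt
          · exact Or.inl (Or.inr (GH_sep (hI u).2 (hI v).2 hdisj hx0 hy0 hlt))
          · exact Or.inr (Or.inr (GH_sep (hI v).2 (hI u).2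
              (fun x hx hy => hdisj x hy hx) hy0 hx0 hlt))
        · rintro (h | h)
          · rcases h with rfl | h
            · exact absurd rfl huv
            refine ⟨huv, fun hA => ?_⟩
            obtain ⟨z, hz1, hz2⟩ := (hadj u v huv).mp hA
            exact lt_irrefl z (h z hz1 z hz2)
          · rcases h with rfl | h
            · exact absurd rfl huv
            refine ⟨huv, fun hA => ?_⟩
            obtain ⟨z, hz1, hz2⟩ := (hadj u v huv).mp hA
            exact lt_irrefl z (h z hz2 z hz1)
  · rintro ⟨hC4, p, hp⟩
    refine GH_backward (r := fun u v => u ≠ v ∧ p.le u v) ?_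
    constructor
    · rintro u v ⟨hne, -⟩
      exact hne
    · rintro u v ⟨hne, hle⟩
      exact ((G.compl_adj u v).mp ((hp u v hne).mpr (Or.inl hle))).2
    · intro u v hne hnadj
      rcases (hp u v hne).mp ((G.compl_adj u v).mpr ⟨hne, hnadj⟩) with h1 | h1
      · exact Or.inl ⟨hne, h1⟩
      · exact Or.inr ⟨hne.symm, h1⟩
    · rintro u v ⟨hne, h1⟩ ⟨-, h2⟩
      exact hne (p.le_antisymm _ _ h1 h2)
    · rintro u v w ⟨hne1, h1⟩ ⟨hne2, h2⟩
      refine ⟨?_, p.le_trans _ _ _ h1 h2⟩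
      rintro rfl
      exact hne1 (p.le_antisymm _ _ h1 h2)
    · exact hC4
end

section
/- A binary matrix M has the consecutive ones property if and only if the set system S(M) admits an intersection cardinality preserving interval assignment (ICPIA). -/
open Finset in
lemma myIccInter (a b c d : ℤ) :
    Finset.Icc a b ∩ Finset.Icc c d = Finset.Icc (max a c) (min b d) := by
  ext x; simp only [mem_inter, mem_Icc]; omega

open Finset in
lemma myTripleLemma {α : Type*} [DecidableEq α] (A B C : Finset α) (a1 b1 a2 b2 a3 b3 : ℤ)
    (hA : A.card = (b1 + 1 - a1).toNat)
    (hB : B.card = (b2 + 1 - a2).toNat)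
    (hC : C.card = (b3 + 1 - a3).toNat)
    (hAB : (A ∩ B).card = (min b1 b2 + 1 - max a1 a2).toNat)
    (hAC : (A ∩ C).card = (min b1 b3 + 1 - max a1 a3).toNat)
    (hBC : (B ∩ C).card = (min b2 b3 + 1 - max a2 a3).toNat) :
    (A ∩ B ∩ C).card = (min (min b1 b2) b3 + 1 - max (max a1 a2) a3).toNat := by
  have t1 : (A ∩ B ∩ C).card ≤ (A ∩ B).card :=
    card_le_card inter_subset_left
  have t2 : (A ∩ B ∩ C).card ≤ (A ∩ C).card := by
    apply card_le_card; intro x hx; simp only [mem_inter] at *; tauto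
  have t3 : (A ∩ B ∩ C).card ≤ (B ∩ C).card := by
    apply card_le_card; intro x hx; simp only [mem_inter] at *; tauto
  have u1 : (A ∩ B).card + (A ∩ C).card ≤ A.card + (A ∩ B ∩ C).card := by
    have h := Finset.card_union_add_card_inter (A ∩ B) (A ∩ C)
    have h2 : (A ∩ B) ∪ (A ∩ C) ⊆ A := by
      intro x hx; simp only [mem_union, mem_inter] at *; tauto
    have h3 : (A ∩ B) ∩ (A ∩ C) = A ∩ B ∩ C := by
      ext x; simp only [mem_inter]; tauto
    rw [h3] at h
    have := card_le_card h2
    omega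
  have u2 : (A ∩ B).card + (B ∩ C).card ≤ B.card + (A ∩ B ∩ C).card := by
    have h := Finset.card_union_add_card_inter (A ∩ B) (B ∩ C)
    have h2 : (A ∩ B) ∪ (B ∩ C) ⊆ B := by
      intro x hx; simp only [mem_union, mem_inter] at *; tauto
    have h3 : (A ∩ B) ∩ (B ∩ C) = A ∩ B ∩ C := by
      ext x; simp only [mem_inter]; tauto
    rw [h3] at h
    have := card_le_card h2
    omega
  have u3 : (A ∩ C).card + (B ∩ C).card ≤ C.card + (A ∩ B ∩ C).card := by
    have h := Finset.card_union_add_card_inter (A ∩ C) (B ∩ C)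
    have h2 : (A ∩ C) ∪ (B ∩ C) ⊆ C := by
      intro x hx; simp only [mem_union, mem_inter] at *; tauto
    have h3 : (A ∩ C) ∩ (B ∩ C) = A ∩ B ∩ C := by
      ext x; simp only [mem_inter]; tauto
    rw [h3] at h
    have := card_le_card h2
    omega
  omega

open Finset in
lemma myInterMatch {ι α : Type*} [DecidableEq ι] [DecidableEq α] [Fintype α]
    (SS : ι → Finset α) (a b : ι → ℤ)
    (h : ∀ i j, (SS i ∩ SS j).card =
      (Finset.Icc (a i) (b i) ∩ Finset.Icc (a j) (b j)).card) :
    ∀ T : Finset ι, (hT : T.Nonempty) →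
      (T.inf SS).card = (Finset.Icc (T.sup' hT a) (T.inf' hT b)).card := by
  have hself : ∀ i, (SS i).card = ((b i) + 1 - (a i)).toNat := by
    intro i
    have := h i i
    rwa [inter_self, inter_self, Int.card_Icc] at this
  have hpair : ∀ i j, (SS i ∩ SS j).card = (min (b i) (b j) + 1 - max (a i) (a j)).toNat := by
    intro i j
    rw [h i j, myIccInter, Int.card_Icc]
  suffices H : ∀ k, ∀ T : Finset ι, (hT : T.Nonempty) → T.card ≤ k →
      (T.inf SS).card = (Finset.Icc (T.sup' hT a) (T.inf' hT b)).card by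
    intro T hT; exact H T.card T hT le_rfl
  intro k
  induction k with
  | zero => intro T hT hc; exact absurd (Finset.card_pos.mpr hT) (by omega)
  | succ k ih =>
    intro T hT hc
    obtain ⟨x, hx⟩ := hT
    have hTeq : T = insert x (T.erase x) := (Finset.insert_erase hx).symm
    rcases (T.erase x).eq_empty_or_nonempty with h1 | hT1
    · -- T = {x}
      have hT' : T = {x} := by rw [hTeq, h1]; rfl
      subst hT'
      simp only [inf_singleton, sup'_singleton, inf'_singleton, Int.card_Icc, hself x]
    · obtain ⟨y, hy⟩ := hT1
      have hxy : x ≠ y := fun hh => (Finset.ne_of_mem_erase hy) hh.symm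
      have hyT : y ∈ T := Finset.mem_of_mem_erase hy
      set T2 := (T.erase x).erase y with hT2def
      have hxT2 : x ∉ T2 := fun hc => Finset.notMem_erase x T (Finset.mem_of_mem_erase hc)
      have hyT2 : y ∉ T2 := fun hc => Finset.notMem_erase y (T.erase x) hc
      have heq1 : T.erase x = insert y T2 := (Finset.insert_erase hy).symm
      have heq2 : T.erase y = insert x T2 := by
        rw [hT2def, Finset.erase_right_comm]
        exact (Finset.insert_erase (Finset.mem_erase.mpr ⟨hxy, hx⟩)).symm
      have hTeq2 : T = insert x (insert y T2) := by rw [hTeq, heq1]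
      rcases T2.eq_empty_or_nonempty with h2 | hT2
      · -- T = {x, y}
        have hT' : T = insert x {y} := by rw [hTeq2, h2]; rfl
        subst hT'
        rw [Finset.inf_insert, Finset.inf_singleton, inf_eq_inter, hpair x y,
          Finset.sup'_insert, Finset.inf'_insert, sup'_singleton, inf'_singleton,
          Int.card_Icc]
        all_goals exact Finset.singleton_nonempty y
      · -- general case: use triple lemma
        set C := T2.inf SS with hCdef
        set a3 := T2.sup' hT2 a with ha3
        set b3 := T2.inf' hT2 b with hb3
        have hcard2 : T2.card + 2 ≤ T.card := by
          have c1 : (T.erase x).card = T.card - 1 := Finset.card_erase_of_mem hx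
          have c2 : T2.card = (T.erase x).card - 1 := Finset.card_erase_of_mem hy
          have : 0 < T.card := Finset.card_pos.mpr ⟨x, hx⟩
          have : 0 < (T.erase x).card := Finset.card_pos.mpr ⟨y, hy⟩
          omega
        have hC : C.card = (b3 + 1 - a3).toNat := by
          rw [hCdef, ih T2 hT2 (by omega), Int.card_Icc]
        have hAC : (SS x ∩ C).card = (min (b x) b3 + 1 - max (a x) a3).toNat := by
          have hne : (T.erase y).Nonempty := ⟨x, heq2 ▸ Finset.mem_insert_self x T2⟩
          have := ih (T.erase y) hne (by have := Finset.card_erase_of_mem hyT; omega)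
          rw [Finset.sup'_congr hne heq2 (fun _ _ => rfl),
              Finset.inf'_congr hne heq2 (fun _ _ => rfl)] at this
          have hinf : (T.erase y).inf SS = SS x ∩ T2.inf SS := by
            rw [heq2, Finset.inf_insert]; rfl
          rw [hinf, Finset.sup'_insert hT2 a, Finset.inf'_insert hT2 b, Int.card_Icc] at this
          exact this
        have hBC : (SS y ∩ C).card = (min (b y) b3 + 1 - max (a y) a3).toNat := by
          have hne : (T.erase x).Nonempty := ⟨y, hy⟩
          have := ih (T.erase x) hne (by have := Finset.card_erase_of_mem hx; omega)
          rw [Finset.sup'_congr hne heq1 (fun _ _ => rfl),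
              Finset.inf'_congr hne heq1 (fun _ _ => rfl)] at this
          have hinf : (T.erase x).inf SS = SS y ∩ T2.inf SS := by
            rw [heq1, Finset.inf_insert]; rfl
          rw [hinf, Finset.sup'_insert hT2 a, Finset.inf'_insert hT2 b, Int.card_Icc] at this
          exact this
        have key := myTripleLemma (SS x) (SS y) C (a x) (b x) (a y) (b y) a3 b3
          (hself x) (hself y) hC (hpair x y) hAC hBC
        have hTinf : T.inf SS = SS x ∩ SS y ∩ C := by
          rw [hTeq2, Finset.inf_insert, Finset.inf_insert]
          exact (Finset.inter_assoc (SS x) (SS y) C).symm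
        have hTsup : T.sup' ⟨x, hx⟩ a = max (a x) (max (a y) a3) := by
          rw [Finset.sup'_congr ⟨x, hx⟩ hTeq2 (fun _ _ => rfl)]
          have hne : (insert y T2).Nonempty := ⟨y, Finset.mem_insert_self y T2⟩
          rw [Finset.sup'_insert hne a, Finset.sup'_insert hT2 a]
        have hTinfb : T.inf' ⟨x, hx⟩ b = min (b x) (min (b y) b3) := by
          rw [Finset.inf'_congr ⟨x, hx⟩ hTeq2 (fun _ _ => rfl)]
          have hne : (insert y T2).Nonempty := ⟨y, Finset.mem_insert_self y T2⟩
          rw [Finset.inf'_insert hne b, Finset.inf'_insert hT2 b]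
        rw [hTinf, hTsup, hTinfb, Int.card_Icc, key]
        congr 1
        omega
open Finset in
lemma myKeyF {m n : ℕ} (M : Fin m → Fin n → Bool) (a b : Fin m → ℤ)
    (hIC : IsICPIA M a b) :
    ∃ f : Fin n → ℤ, ∀ (i : Fin m) (j : Fin n),
      (M i j = true ↔ f j ∈ Finset.Icc (a i) (b i)) := by
  classical
  set SS : Fin m → Finset (Fin n) := rowFinset M with hSS
  set pat : Fin n → Finset (Fin m) := fun j => univ.filter (fun i => M i j = true) with hpat
  set P : Finset ℤ := univ.biUnion (fun i => Finset.Icc (a i) (b i)) with hP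
  set upat : ℤ → Finset (Fin m) := fun p => univ.filter (fun i => p ∈ Finset.Icc (a i) (b i))
    with hupat
  have im := myInterMatch SS a b hIC
  -- the "at least A" counts match
  have hgeCol : ∀ (A : Finset (Fin m)), (univ.filter fun j => A ⊆ pat j) = A.inf SS := by
    intro A
    ext j
    simp only [Finset.mem_filter, Finset.mem_univ, true_and, Finset.mem_inf,
      Finset.subset_iff, hpat, hSS, rowFinset]
  have hgePt : ∀ (A : Finset (Fin m)) (hA : A.Nonempty),
      (P.filter fun p => A ⊆ upat p) = Finset.Icc (A.sup' hA a) (A.inf' hA b) := by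
    intro A hA
    ext p
    simp only [Finset.mem_filter, Finset.mem_Icc]
    constructor
    · rintro ⟨hPp, hsub⟩
      constructor
      · apply Finset.sup'_le
        intro i hi
        have h2 := hsub hi
        simp only [hupat, Finset.mem_filter, Finset.mem_univ, true_and, Finset.mem_Icc] at h2
        exact h2.1
      · apply Finset.le_inf'
        intro i hi
        have h2 := hsub hi
        simp only [hupat, Finset.mem_filter, Finset.mem_univ, true_and, Finset.mem_Icc] at h2
        exact h2.2
    · rintro ⟨h1, h2⟩
      obtain ⟨i0, hi0⟩ := hA
      have hbnd : ∀ i ∈ A, a i ≤ p ∧ p ≤ b i := by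
        intro i hi
        exact ⟨le_trans (Finset.le_sup' a hi) h1, le_trans h2 (Finset.inf'_le b hi)⟩
      constructor
      · rw [hP]
        apply Finset.mem_biUnion.mpr
        refine ⟨i0, Finset.mem_univ i0, ?_⟩
        have := hbnd i0 hi0
        simp only [Finset.mem_Icc]
        omega
      · intro i hi
        have := hbnd i hi
        simp only [hupat, Finset.mem_filter, Finset.mem_univ, true_and, Finset.mem_Icc]
        omega
  have hgeEq : ∀ (A : Finset (Fin m)) (hA : A.Nonempty),
      (univ.filter fun j => A ⊆ pat j).card = (P.filter fun p => A ⊆ upat p).card := by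
    intro A hA
    rw [hgeCol A, hgePt A hA]
    exact im A hA
  -- exact pattern counts match
  have hEq : ∀ (A : Finset (Fin m)), A.Nonempty →
      (univ.filter fun j : Fin n => pat j = A).card = (P.filter fun p => upat p = A).card := by
    suffices H : ∀ k, ∀ A : Finset (Fin m), A.Nonempty → m - A.card < k →
        (univ.filter fun j : Fin n => pat j = A).card =
        (P.filter fun p => upat p = A).card by
      intro A hA; exact H (m + 1) A hA (by omega)
    intro k
    induction k with
    | zero => intro A hA hk; omega
    | succ k ih =>
      intro A hA hk
      set t : Finset (Finset (Fin m)) := univ.powerset.filter (fun B => A ⊆ B) with ht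
      have hcolfib : (univ.filter fun j => A ⊆ pat j).card =
          ∑ B ∈ t, (univ.filter fun j : Fin n => pat j = B).card := by
        rw [Finset.card_eq_sum_card_fiberwise (f := pat)
          (t := t) (fun j hj => by
            simp only [Finset.mem_coe, Finset.mem_filter, Finset.mem_univ, true_and] at hj
            simp only [Finset.mem_coe, ht, Finset.mem_filter, Finset.mem_powerset]
            exact ⟨Finset.subset_univ _, hj⟩)]
        apply Finset.sum_congr rfl
        intro B hB
        congr 1
        ext j
        simp only [ht, Finset.mem_filter, Finset.mem_powerset, Finset.mem_univ, true_and] at hB ⊢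
        constructor
        · rintro ⟨h1, h2⟩; exact h2
        · intro h2; exact ⟨h2 ▸ hB.2, h2⟩
      have hptfib : (P.filter fun p => A ⊆ upat p).card =
          ∑ B ∈ t, (P.filter fun p => upat p = B).card := by
        rw [Finset.card_eq_sum_card_fiberwise (f := upat)
          (t := t) (fun p hp => by
            simp only [Finset.mem_coe, Finset.mem_filter] at hp
            simp only [Finset.mem_coe, ht, Finset.mem_filter, Finset.mem_powerset]
            exact ⟨Finset.subset_univ _, hp.2⟩)]
        apply Finset.sum_congr rfl
        intro B hB
        congr 1
        ext p
        simp only [ht, Finset.mem_filter, Finset.mem_powerset, Finset.mem_univ, true_and] at hB ⊢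
        constructor
        · rintro ⟨⟨h0, h1⟩, h2⟩; exact ⟨h0, h2⟩
        · rintro ⟨h0, h2⟩; exact ⟨⟨h0, h2 ▸ hB.2⟩, h2⟩
      have hAt : A ∈ t := by
        simp only [ht, Finset.mem_filter, Finset.mem_powerset]
        exact ⟨Finset.subset_univ _, Finset.Subset.refl A⟩
      have hrest : ∀ B ∈ t.erase A,
          (univ.filter fun j : Fin n => pat j = B).card =
          (P.filter fun p => upat p = B).card := by
        intro B hB
        have hBA : B ≠ A := Finset.ne_of_mem_erase hB
        have hBt : B ∈ t := Finset.mem_of_mem_erase hB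
        simp only [ht, Finset.mem_filter, Finset.mem_powerset] at hBt
        have hss : A ⊂ B := lt_of_le_of_ne hBt.2 (Ne.symm hBA)
        have hcard : A.card < B.card := Finset.card_lt_card hss
        have hBm : B.card ≤ m := le_trans (Finset.card_le_univ B) (by simp)
        exact ih B (hA.mono hss.subset) (by omega)
      have hsum : ∑ B ∈ t, (univ.filter fun j : Fin n => pat j = B).card =
          ∑ B ∈ t, (P.filter fun p => upat p = B).card := by
        rw [← hcolfib, ← hptfib, hgeEq A hA]
      have e1 := Finset.sum_erase_add t (fun B => (univ.filter fun j : Fin n => pat j = B).card) hAt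
      have e2 := Finset.sum_erase_add t (fun B => (P.filter fun p => upat p = B).card) hAt
      have e3 : ∑ B ∈ t.erase A, (univ.filter fun j : Fin n => pat j = B).card =
          ∑ B ∈ t.erase A, (P.filter fun p => upat p = B).card :=
        Finset.sum_congr rfl hrest
      omega
  -- construct f
  set big : ℤ := (if hP : P.Nonempty then P.max' hP else 0) + 1 with hbig
  have hbigP : ∀ p ∈ P, p < big := by
    intro p hp
    have hPne : P.Nonempty := ⟨p, hp⟩
    have := Finset.le_max' P p hp
    rw [hbig, dif_pos hPne]
    omega
  refine ⟨fun j => if h : (P.filter fun p => upat p = pat j).Nonempty then h.choose else big, ?_⟩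
  intro i j
  by_cases h : (P.filter fun p => upat p = pat j).Nonempty
  · have hspec := h.choose_spec
    simp only [Finset.mem_filter] at hspec
    simp only [dif_pos h]
    have hup : upat h.choose = pat j := hspec.2
    constructor
    · intro hM
      have : i ∈ pat j := by simp [hpat, hM]
      rw [← hup] at this
      simp only [hupat, Finset.mem_filter] at this
      exact this.2
    · intro hmem
      have : i ∈ upat h.choose := by
        simp only [hupat, Finset.mem_filter, Finset.mem_univ, true_and]
        exact hmem
      rw [hup] at this
      simp only [hpat, Finset.mem_filter] at this
      exact this.2
  · simp only [dif_neg h]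
    -- pat j must be empty
    have hpatj : pat j = ∅ := by
      by_contra hne
      have hAne : (pat j).Nonempty := Finset.nonempty_iff_ne_empty.mpr hne
      have := hEq (pat j) hAne
      have hjmem : j ∈ univ.filter fun j' : Fin n => pat j' = pat j := by
        simp
      have hpos : 0 < (univ.filter fun j' : Fin n => pat j' = pat j).card :=
        Finset.card_pos.mpr ⟨j, hjmem⟩
      rw [this] at hpos
      exact h (Finset.card_pos.mp hpos)
    constructor
    · intro hM
      exfalso
      have : i ∈ pat j := by simp [hpat, hM]
      rw [hpatj] at this
      exact absurd this (Finset.notMem_empty i)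
    · intro hmem
      exfalso
      have hPmem : big ∈ P := by
        rw [hP]
        exact Finset.mem_biUnion.mpr ⟨i, Finset.mem_univ i, hmem⟩
      exact absurd (hbigP big hPmem) (lt_irrefl big)
/-- A binary matrix has the consecutive ones property iff its
set system admits an ICPIA. -/
theorem stmt2 {m n : ℕ} (M : Fin m → Fin n → Bool) :
    HasCOP M ↔ ∃ a b : Fin m → ℤ, IsICPIA M a b := by
  classical
  constructor
  · -- COP → ICPIA
    rintro ⟨σ, hσ⟩
    set pos : Fin m → Finset (Fin n) :=
      fun i => Finset.univ.filter (fun k => M i (σ k) = true) with hpos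
    set a : Fin m → ℤ :=
      fun i => if h : (pos i).Nonempty then (((pos i).min' h : Fin n) : ℕ) else 1 with ha
    set b : Fin m → ℤ :=
      fun i => if h : (pos i).Nonempty then (((pos i).max' h : Fin n) : ℕ) else 0 with hb
    set g : Fin n → ℤ := fun j => ((σ.symm j : Fin n) : ℕ) with hg
    have hginj : Function.Injective g := by
      intro x y hxy
      simp only [hg] at hxy
      have : (σ.symm x : Fin n) = σ.symm y := Fin.val_injective (by exact_mod_cast hxy)
      exact σ.symm.injective this
    have himg : ∀ i, (rowFinset M i).image g = Finset.Icc (a i) (b i) := by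
      intro i
      by_cases h : (pos i).Nonempty
      · ext p
        simp only [Finset.mem_image, Finset.mem_Icc, ha, hb, dif_pos h]
        constructor
        · rintro ⟨j, hj, rfl⟩
          simp only [rowFinset, Finset.mem_filter, Finset.mem_univ, true_and] at hj
          have hk : σ.symm j ∈ pos i := by
            simp only [hpos, Finset.mem_filter, Finset.mem_univ, true_and,
              Equiv.apply_symm_apply]
            exact hj
          have h1 := Finset.min'_le (pos i) _ hk
          have h2 := Finset.le_max' (pos i) _ hk
          rw [Fin.le_def] at h1 h2
          simp only [hg]
          omega
        · rintro ⟨h1, h2⟩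
          set lo := (pos i).min' h with hlo
          set hi := (pos i).max' h with hhi
          have hpn : (p.toNat : ℤ) = p := by omega
          have hplt : p.toNat < n := by
            have := hi.isLt
            omega
          set k : Fin n := ⟨p.toNat, hplt⟩ with hk
          have hlok : lo ≤ k := by rw [Fin.le_def]; simp [hk]; omega
          have hkhi : k ≤ hi := by rw [Fin.le_def]; simp [hk]; omega
          have hlomem := Finset.min'_mem (pos i) h
          have hhimem := Finset.max'_mem (pos i) h
          simp only [hpos, Finset.mem_filter, Finset.mem_univ, true_and] at hlomem hhimem
          have hkmem : M i (σ k) = true := hσ i lo k hi hlok hkhi hlomem hhimem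
          refine ⟨σ k, ?_, ?_⟩
          · simp only [rowFinset, Finset.mem_filter, Finset.mem_univ, true_and]
            exact hkmem
          · simp only [hg, Equiv.symm_apply_apply, hk]
            omega
      · have hrow : rowFinset M i = ∅ := by
          rw [Finset.eq_empty_iff_forall_notMem]
          intro j hj
          simp only [rowFinset, Finset.mem_filter, Finset.mem_univ, true_and] at hj
          apply h
          refine ⟨σ.symm j, ?_⟩
          simp only [hpos, Finset.mem_filter, Finset.mem_univ, true_and,
            Equiv.apply_symm_apply]
          exact hj
        rw [hrow]
        simp only [ha, hb, dif_neg h, Finset.image_empty]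
        rw [Finset.Icc_eq_empty (by omega)]
    refine ⟨a, b, ?_⟩
    intro i j
    calc (rowFinset M i ∩ rowFinset M j).card
        = ((rowFinset M i ∩ rowFinset M j).image g).card :=
          (Finset.card_image_of_injective _ hginj).symm
      _ = ((rowFinset M i).image g ∩ (rowFinset M j).image g).card := by
          rw [Finset.image_inter _ _ hginj]
      _ = (Finset.Icc (a i) (b i) ∩ Finset.Icc (a j) (b j)).card := by
          rw [himg i, himg j]
  · -- ICPIA → COP
    rintro ⟨a, b, hIC⟩
    obtain ⟨f, hf⟩ := myKeyF M a b hIC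
    refine ⟨Tuple.sort f, ?_⟩
    intro i u v w huv hvw h1 h2
    have mono := Tuple.monotone_sort f
    have m1 : f (Tuple.sort f u) ≤ f (Tuple.sort f v) := mono huv
    have m2 : f (Tuple.sort f v) ≤ f (Tuple.sort f w) := mono hvw
    have hu := (hf i (Tuple.sort f u)).mp h1
    have hw := (hf i (Tuple.sort f w)).mp h2
    rw [Finset.mem_Icc] at hu hw
    exact (hf i (Tuple.sort f v)).mpr (Finset.mem_Icc.mpr ⟨le_trans hu.1 m1, le_trans m2 hw.2⟩)
end

section
/- If I = {I_1, …, I_m} is an ICPIA for the set system S(M) = {S_1, …, S_m} of a binary matrix M, then for every collection of indices i_1, …, i_r, the cardinality of the intersection S_{i_1} ∩ ⋯ ∩ S_{i_r} equals the cardinality of the intersection I_{i_1} ∩ ⋯ ∩ I_{i_r}. -/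
section ICPIAAux

lemma zIcc_inter_zIcc (a₁ b₁ a₂ b₂ : ℤ) :
    Finset.Icc a₁ b₁ ∩ Finset.Icc a₂ b₂ = Finset.Icc (a₁ ⊔ a₂) (b₁ ⊓ b₂) := by
  ext x
  simp only [Finset.mem_inter, Finset.mem_Icc, sup_le_iff, le_inf_iff]
  tauto

variable {ι α : Type*} [DecidableEq ι] [DecidableEq α]

/-- Abbreviation for the pairwise ICPIA hypothesis. -/
abbrev PairHyp (S : ι → Finset α) (A B : ι → ℤ) : Prop :=
  ∀ i j, (S i ∩ S j).card = (Finset.Icc (A i) (B i) ∩ Finset.Icc (A j) (B j)).card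

/-- The triple intersection statement. -/
abbrev Trip3 (S : ι → Finset α) (A B : ι → ℤ) (i j k : ι) : Prop :=
  (S i ∩ S j ∩ S k).card =
    (Finset.Icc (A i) (B i) ∩ Finset.Icc (A j) (B j) ∩ Finset.Icc (A k) (B k)).card

lemma trip3_swap12 {S : ι → Finset α} {A B : ι → ℤ} {i j k : ι}
    (h : Trip3 S A B j i k) : Trip3 S A B i j k := by
  unfold Trip3 at *
  rwa [Finset.inter_comm (S j) (S i),
    Finset.inter_comm (Finset.Icc (A j) (B j)) (Finset.Icc (A i) (B i))] at h

lemma trip3_swap23 {S : ι → Finset α} {A B : ι → ℤ} {i j k : ι}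
    (h : Trip3 S A B i k j) : Trip3 S A B i j k := by
  unfold Trip3 at *
  rwa [Finset.inter_right_comm (S i) (S k) (S j),
    Finset.inter_right_comm (Finset.Icc (A i) (B i)) (Finset.Icc (A k) (B k))
      (Finset.Icc (A j) (B j))] at h

lemma card_row {S : ι → Finset α} {A B : ι → ℤ} (h : PairHyp S A B) (i : ι) :
    (S i).card = (Finset.Icc (A i) (B i)).card := by
  simpa using h i i

lemma row_subset {S : ι → Finset α} {A B : ι → ℤ} (h : PairHyp S A B) {x q : ι}
    (hA : A x ≤ A q) (hB : B q ≤ B x) : S q ⊆ S x := by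
  have h1 : (S q ∩ S x).card = (Finset.Icc (A q) (B q)).card := by
    rw [h q x, zIcc_inter_zIcc, sup_eq_left.mpr hA, inf_eq_left.mpr hB]
  have h2 := card_row h q
  have h3 : S q ∩ S x = S q :=
    Finset.eq_of_subset_of_card_le Finset.inter_subset_left (by omega)
  exact Finset.inter_eq_left.mp h3

lemma trip_nest {S : ι → Finset α} {A B : ι → ℤ} (h : PairHyp S A B) {i j : ι} (k : ι)
    (hA : A i ≤ A j) (hB : B j ≤ B i) : Trip3 S A B i j k := by
  have hsub : S j ⊆ S i := row_subset h hA hB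
  have e1 : S i ∩ S j = S j := Finset.inter_eq_right.mpr hsub
  have e2 : Finset.Icc (A i) (B i) ∩ Finset.Icc (A j) (B j) = Finset.Icc (A j) (B j) := by
    rw [zIcc_inter_zIcc, sup_eq_right.mpr hA, inf_eq_right.mpr hB]
  unfold Trip3
  rw [e1, e2]
  exact h j k

lemma trip_can {S : ι → Finset α} {A B : ι → ℤ} (h : PairHyp S A B) {p c q : ι}
    (h1 : A p ≤ A c) (h2 : A c ≤ A q) (h3 : B p ≤ B c) (h4 : B c ≤ B q) :
    Trip3 S A B p c q := by
  unfold Trip3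
  have eI : Finset.Icc (A p) (B p) ∩ Finset.Icc (A c) (B c) ∩ Finset.Icc (A q) (B q)
      = Finset.Icc (A q) (B p) := by
    rw [zIcc_inter_zIcc, sup_eq_right.mpr h1, inf_eq_left.mpr h3, zIcc_inter_zIcc,
      sup_eq_right.mpr h2, inf_eq_left.mpr (h3.trans h4)]
  rw [eI]
  have hsubpq : S p ∩ S c ∩ S q ⊆ S p ∩ S q := by
    intro t ht
    simp only [Finset.mem_inter] at *
    tauto
  have hle : (S p ∩ S c ∩ S q).card ≤ (Finset.Icc (A q) (B p)).card := by
    have hc := Finset.card_le_card hsubpq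
    have hpq : (S p ∩ S q).card = (Finset.Icc (A q) (B p)).card := by
      rw [h p q, zIcc_inter_zIcc, sup_eq_right.mpr (h1.trans h2),
        inf_eq_left.mpr (h3.trans h4)]
    omega
  rcases le_or_gt (A q) (B p) with hne | hlt
  · have hXY : (S p ∩ S c) ∩ (S c ∩ S q) = S p ∩ S c ∩ S q := by
      ext t
      simp only [Finset.mem_inter]
      tauto
    have hsum := Finset.card_inter_add_card_union (S p ∩ S c) (S c ∩ S q)
    rw [hXY] at hsum
    have hU : ((S p ∩ S c) ∪ (S c ∩ S q)).card ≤ (S c).card :=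
      Finset.card_le_card (Finset.union_subset Finset.inter_subset_right
        Finset.inter_subset_left)
    have e1 : (S p ∩ S c).card = (Finset.Icc (A c) (B p)).card := by
      rw [h p c, zIcc_inter_zIcc, sup_eq_right.mpr h1, inf_eq_left.mpr h3]
    have e2 : (S c ∩ S q).card = (Finset.Icc (A q) (B c)).card := by
      rw [h c q, zIcc_inter_zIcc, sup_eq_right.mpr h2, inf_eq_left.mpr h4]
    have e3 := card_row h c
    rw [Int.card_Icc] at e1 e2 e3 hle ⊢
    omega
  · have hemp : Finset.Icc (A q) (B p) = ∅ := Finset.Icc_eq_empty (by omega)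
    rw [hemp, Finset.card_empty] at hle ⊢
    omega

lemma trip_full {S : ι → Finset α} {A B : ι → ℤ} (h : PairHyp S A B) :
    ∀ i j k, Trip3 S A B i j k := by
  have aux : ∀ i j k : ι, A i ≤ A j → Trip3 S A B i j k := by
    intro i j k hij
    rcases le_total (B j) (B i) with hb | hb
    · exact trip_nest h k hij hb
    · rcases le_total (A k) (A i) with hki | hki
      · rcases le_total (B i) (B k) with hbk | hbk
        · exact trip3_swap23 (trip3_swap12 (trip_nest h j hki hbk))
        · exact trip3_swap23 (trip3_swap12 (trip_can h hki hij hbk hb))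
      · rcases le_total (B k) (B i) with hbk | hbk
        · exact trip3_swap23 (trip_nest h j hki hbk)
        · rcases le_total (A j) (A k) with hjk | hjk
          · rcases le_total (B k) (B j) with hbj | hbj
            · exact trip3_swap12 (trip3_swap23 (trip_nest h i hjk hbj))
            · exact trip_can h hij hjk hb hbj
          · rcases le_total (B j) (B k) with hbj | hbj
            · exact trip3_swap12 (trip3_swap23 (trip3_swap12 (trip_nest h i hjk hbj)))
            · exact trip3_swap23 (trip_can h hki hjk hbk hbj)
  intro i j k
  rcases le_total (A i) (A j) with hij | hij
  · exact aux i j k hij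
  · exact trip3_swap12 (aux j i k hij)

lemma inf'_update_inter {β : Type*} [SemilatticeInf β] {T : Finset ι} (hT : T.Nonempty)
    {j0 : ι} (hj0 : j0 ∈ T) (f : ι → β) (v : β) :
    T.inf' hT (Function.update f j0 (v ⊓ f j0)) = v ⊓ T.inf' hT f := by
  apply le_antisymm
  · refine le_inf ?_ ?_
    · exact le_trans (Finset.inf'_le _ hj0)
        (by rw [Function.update_self]; exact inf_le_left)
    · refine Finset.le_inf' _ _ fun x hx => ?_
      by_cases hxj : x = j0
      · subst hxj
        exact le_trans (Finset.inf'_le _ hx)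
          (by rw [Function.update_self]; exact inf_le_right)
      · exact le_trans (Finset.inf'_le _ hx) (le_of_eq (Function.update_of_ne hxj _ _))
  · refine Finset.le_inf' _ _ fun x hx => ?_
    by_cases hxj : x = j0
    · subst hxj
      rw [Function.update_self]
      exact le_inf inf_le_left (le_trans inf_le_right (Finset.inf'_le _ hx))
    · rw [Function.update_of_ne hxj]
      exact le_trans inf_le_right (Finset.inf'_le _ hx)

lemma inf'_erase_eq {β : Type*} [SemilatticeInf β] {T : Finset ι} {i0 : ι} (hi0 : i0 ∈ T)
    (hne : (T.erase i0).Nonempty) (f : ι → β) (hT : T.Nonempty) :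
    T.inf' hT f = f i0 ⊓ (T.erase i0).inf' hne f := by
  apply le_antisymm
  · exact le_inf (Finset.inf'_le _ hi0)
      (Finset.le_inf' _ _ fun x hx => Finset.inf'_le _ (Finset.mem_of_mem_erase hx))
  · refine Finset.le_inf' _ _ fun x hx => ?_
    by_cases hxi : x = i0
    · subst hxi
      exact inf_le_left
    · exact le_trans inf_le_right (Finset.inf'_le _ (Finset.mem_erase.mpr ⟨hxi, hx⟩))

lemma icpia_inf' (T : Finset ι) :
    ∀ (S : ι → Finset α) (A B : ι → ℤ), PairHyp S A B → ∀ (hT : T.Nonempty),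
      (T.inf' hT S).card = (T.inf' hT fun i => Finset.Icc (A i) (B i)).card := by
  induction T using Finset.strongInduction with
  | _ T IH =>
    intro S A B h hT
    obtain ⟨i0, hi0⟩ := hT
    rcases (T.erase i0).eq_empty_or_nonempty with he | hne
    · have hsing : T = {i0} := by
        apply Finset.eq_singleton_iff_unique_mem.mpr
        refine ⟨hi0, fun x hx => ?_⟩
        by_contra hx0
        have : x ∈ T.erase i0 := Finset.mem_erase.mpr ⟨hx0, hx⟩
        simp [he] at this
      subst hsing
      simp only [Finset.inf'_singleton]
      simpa using h i0 i0
    · obtain ⟨j0, hj0⟩ := hne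
      have hne' : (T.erase i0).Nonempty := ⟨j0, hj0⟩
      have h' : PairHyp (Function.update S j0 (S i0 ∩ S j0))
          (Function.update A j0 (A i0 ⊔ A j0)) (Function.update B j0 (B i0 ⊓ B j0)) := by
        intro x y
        rcases eq_or_ne x j0 with hx | hx <;> rcases eq_or_ne y j0 with hy | hy
        · rw [hx, hy]
          simp only [Function.update_self]
          rw [Finset.inter_self, Finset.inter_self, ← zIcc_inter_zIcc]
          exact h i0 j0
        · rw [hx]
          simp only [Function.update_self, Function.update_of_ne hy]
          rw [← zIcc_inter_zIcc]
          exact trip_full h i0 j0 y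
        · rw [hy]
          simp only [Function.update_self, Function.update_of_ne hx]
          rw [← zIcc_inter_zIcc, Finset.inter_comm (S x),
            Finset.inter_comm (Finset.Icc (A x) (B x))]
          exact trip_full h i0 j0 x
        · simp only [Function.update_of_ne hx, Function.update_of_ne hy]
          exact h x y
      have step := IH (T.erase i0) (Finset.erase_ssubset hi0)
        (Function.update S j0 (S i0 ∩ S j0))
        (Function.update A j0 (A i0 ⊔ A j0)) (Function.update B j0 (B i0 ⊓ B j0)) h' hne'
      have eS : T.inf' ⟨i0, hi0⟩ S
          = (T.erase i0).inf' hne' (Function.update S j0 (S i0 ∩ S j0)) := by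
        rw [inf'_erase_eq hi0 hne' S ⟨i0, hi0⟩]
        exact (inf'_update_inter hne' hj0 S (S i0)).symm
      have efun : (fun i => Finset.Icc (Function.update A j0 (A i0 ⊔ A j0) i)
            (Function.update B j0 (B i0 ⊓ B j0) i))
          = Function.update (fun i => Finset.Icc (A i) (B i)) j0
            (Finset.Icc (A i0) (B i0) ∩ Finset.Icc (A j0) (B j0)) := by
        funext x
        rcases eq_or_ne x j0 with hx | hx
        · subst hx
          simp only [Function.update_self]
          rw [zIcc_inter_zIcc]
        · simp only [Function.update_of_ne hx]
      have eI : T.inf' ⟨i0, hi0⟩ (fun i => Finset.Icc (A i) (B i))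
          = (T.erase i0).inf' hne' (fun i => Finset.Icc (Function.update A j0 (A i0 ⊔ A j0) i)
              (Function.update B j0 (B i0 ⊓ B j0) i)) := by
        rw [efun, inf'_erase_eq hi0 hne' (fun i => Finset.Icc (A i) (B i)) ⟨i0, hi0⟩]
        exact (inf'_update_inter hne' hj0 (fun i => Finset.Icc (A i) (B i))
          (Finset.Icc (A i0) (B i0))).symm
      rw [eS, eI]
      exact step

end ICPIAAux

/-- If `I` is an ICPIA for `S(M)`, then for every (nonempty)
collection of indices, the intersection of the row sets and the intersection
of the assigned intervals have equal cardinality. -/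
theorem stmt3 {m n : ℕ} (M : Fin m → Fin n → Bool) (a b : Fin m → ℤ)
    (h : IsICPIA M a b) (T : Finset (Fin m)) (hT : T.Nonempty) :
    (T.inf' hT (rowFinset M)).card =
    (T.inf' hT (fun i => Finset.Icc (a i) (b i))).card := by
  exact icpia_inf' T (rowFinset M) a b h hT
end

section
/- Let M be a binary matrix and let S_1, S_2, S_3 be three pairwise intersecting sets of its set system S(M), corresponding to rows r_1, r_2, r_3, such that either S_1 ∩ S_2 ∩ S_3 = ∅, or none of S_1, S_2, S_3 is contained in the union of the other two. Then every set D of rows of M for which M \ D has the consecutive ones property contains at least one of r_1, r_2, r_3. -/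
/-- Three pairwise intersecting order-convex sets in a linear order have a
common point, and one of them is contained in the union of the other two. -/
lemma helly3 {α : Type*} [LinearOrder α] {T1 T2 T3 : Set α}
    (c1 : ∀ a b c : α, a ≤ b → b ≤ c → a ∈ T1 → c ∈ T1 → b ∈ T1)
    (c2 : ∀ a b c : α, a ≤ b → b ≤ c → a ∈ T2 → c ∈ T2 → b ∈ T2)
    (c3 : ∀ a b c : α, a ≤ b → b ≤ c → a ∈ T3 → c ∈ T3 → b ∈ T3)
    (h12 : (T1 ∩ T2).Nonempty) (h13 : (T1 ∩ T3).Nonempty)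
    (h23 : (T2 ∩ T3).Nonempty) :
    (T1 ∩ T2 ∩ T3).Nonempty ∧
      (T1 ⊆ T2 ∪ T3 ∨ T2 ⊆ T1 ∪ T3 ∨ T3 ⊆ T1 ∪ T2) := by
  obtain ⟨p, hp1, hp2⟩ := h12
  obtain ⟨q, hq1, hq3⟩ := h13
  obtain ⟨r, hr2, hr3⟩ := h23
  -- the median of p, q, r lies in all three sets
  have hmed : ∃ w, w ∈ T1 ∧ w ∈ T2 ∧ w ∈ T3 := by
    rcases le_total p q with hpq | hpq <;> rcases le_total p r with hpr | hpr <;>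
      rcases le_total q r with hqr | hqr
    · exact ⟨q, hq1, c2 p q r hpq hqr hp2 hr2, hq3⟩
    · exact ⟨r, c1 p r q hpr hqr hp1 hq1, hr2, hr3⟩
    · exact ⟨q, hq1, c2 p q r hpq hqr hp2 hr2, hq3⟩
    · exact ⟨p, hp1, hp2, c3 r p q hpr hpq hr3 hq3⟩
    · exact ⟨p, hp1, hp2, c3 q p r hpq hpr hq3 hr3⟩
    · exact ⟨p, hp1, hp2, c3 q p r hpq hpr hq3 hr3⟩
    · exact ⟨r, c1 q r p hqr hpr hq1 hp1, hr2, hr3⟩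
    · exact ⟨q, hq1, c2 r q p hqr hpq hr2 hp2, hq3⟩
  obtain ⟨w, hw1, hw2, hw3⟩ := hmed
  refine ⟨⟨w, ⟨hw1, hw2⟩, hw3⟩, ?_⟩
  by_contra hcon
  push_neg at hcon
  obtain ⟨hc1, hc2, hc3⟩ := hcon
  obtain ⟨x1, hx1, hx1'⟩ := Set.not_subset.1 hc1
  obtain ⟨x2, hx2, hx2'⟩ := Set.not_subset.1 hc2
  obtain ⟨x3, hx3, hx3'⟩ := Set.not_subset.1 hc3
  simp only [Set.mem_union, not_or] at hx1' hx2' hx3'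
  have side : ∀ (T : Set α) (x y : α),
      (∀ a b c : α, a ≤ b → b ≤ c → a ∈ T → c ∈ T → b ∈ T) →
      x ∈ T → w ∈ T → (x ≤ y ∧ y ≤ w) ∨ (w ≤ y ∧ y ≤ x) → y ∈ T := by
    rintro T x y hc hx hw (⟨h1, h2⟩ | ⟨h1, h2⟩)
    · exact hc x y w h1 h2 hx hw
    · exact hc w y x h1 h2 hw hx
  have pair12le : x1 ≤ w → x2 ≤ w → False := by
    intro s1 s2
    rcases le_total x1 x2 with h | h
    · exact hx2'.1 (side T1 x1 x2 c1 hx1 hw1 (Or.inl ⟨h, s2⟩))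
    · exact hx1'.1 (side T2 x2 x1 c2 hx2 hw2 (Or.inl ⟨h, s1⟩))
  have pair12ge : w ≤ x1 → w ≤ x2 → False := by
    intro s1 s2
    rcases le_total x1 x2 with h | h
    · exact hx1'.1 (side T2 x2 x1 c2 hx2 hw2 (Or.inr ⟨s1, h⟩))
    · exact hx2'.1 (side T1 x1 x2 c1 hx1 hw1 (Or.inr ⟨s2, h⟩))
  have pair13le : x1 ≤ w → x3 ≤ w → False := by
    intro s1 s3
    rcases le_total x1 x3 with h | h
    · exact hx3'.1 (side T1 x1 x3 c1 hx1 hw1 (Or.inl ⟨h, s3⟩))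
    · exact hx1'.2 (side T3 x3 x1 c3 hx3 hw3 (Or.inl ⟨h, s1⟩))
  have pair13ge : w ≤ x1 → w ≤ x3 → False := by
    intro s1 s3
    rcases le_total x1 x3 with h | h
    · exact hx1'.2 (side T3 x3 x1 c3 hx3 hw3 (Or.inr ⟨s1, h⟩))
    · exact hx3'.1 (side T1 x1 x3 c1 hx1 hw1 (Or.inr ⟨s3, h⟩))
  have pair23le : x2 ≤ w → x3 ≤ w → False := by
    intro s2 s3
    rcases le_total x2 x3 with h | h
    · exact hx3'.2 (side T2 x2 x3 c2 hx2 hw2 (Or.inl ⟨h, s3⟩))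
    · exact hx2'.2 (side T3 x3 x2 c3 hx3 hw3 (Or.inl ⟨h, s2⟩))
  have pair23ge : w ≤ x2 → w ≤ x3 → False := by
    intro s2 s3
    rcases le_total x2 x3 with h | h
    · exact hx2'.2 (side T3 x3 x2 c3 hx3 hw3 (Or.inr ⟨s2, h⟩))
    · exact hx3'.2 (side T2 x2 x3 c2 hx2 hw2 (Or.inr ⟨s3, h⟩))
  rcases le_total x1 w with s1 | s1 <;> rcases le_total x2 w with s2 | s2 <;>
    rcases le_total x3 w with s3 | s3
  · exact pair12le s1 s2
  · exact pair12le s1 s2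
  · exact pair13le s1 s3
  · exact pair23ge s2 s3
  · exact pair23le s2 s3
  · exact pair13ge s1 s3
  · exact pair12ge s1 s2
  · exact pair12ge s1 s2

/-- Branching rule 1: If three pairwise intersecting row sets
`S_1, S_2, S_3` of `M` either have empty common intersection, or none of them
is contained in the union of the other two, then every row-deletion set `D`
giving COP contains one of the three rows. -/
theorem stmt11 {m n : ℕ} (M : Fin m → Fin n → Bool) (r1 r2 r3 : Fin m)
    (h12 : r1 ≠ r2) (h13 : r1 ≠ r3) (h23 : r2 ≠ r3)
    (hi12 : (rowSet M r1 ∩ rowSet M r2).Nonempty)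
    (hi13 : (rowSet M r1 ∩ rowSet M r3).Nonempty)
    (hi23 : (rowSet M r2 ∩ rowSet M r3).Nonempty)
    (hviol : rowSet M r1 ∩ rowSet M r2 ∩ rowSet M r3 = ∅ ∨
      (¬ rowSet M r1 ⊆ rowSet M r2 ∪ rowSet M r3 ∧
       ¬ rowSet M r2 ⊆ rowSet M r1 ∪ rowSet M r3 ∧
       ¬ rowSet M r3 ⊆ rowSet M r1 ∪ rowSet M r2))
    (D : Set (Fin m)) (hD : HasCOP (delRows M D)) :
    r1 ∈ D ∨ r2 ∈ D ∨ r3 ∈ D := by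
  by_contra hcon
  push_neg at hcon
  obtain ⟨hr1, hr2, hr3⟩ := hcon
  obtain ⟨σ, hσ⟩ := hD
  set T1 : Set (Fin n) := {p | M r1 (σ p) = true} with hT1
  set T2 : Set (Fin n) := {p | M r2 (σ p) = true} with hT2
  set T3 : Set (Fin n) := {p | M r3 (σ p) = true} with hT3
  have c1 : ∀ a b c : Fin n, a ≤ b → b ≤ c → a ∈ T1 → c ∈ T1 → b ∈ T1 :=
    fun a b c hab hbc ha hc => hσ ⟨r1, hr1⟩ a b c hab hbc ha hc
  have c2 : ∀ a b c : Fin n, a ≤ b → b ≤ c → a ∈ T2 → c ∈ T2 → b ∈ T2 :=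
    fun a b c hab hbc ha hc => hσ ⟨r2, hr2⟩ a b c hab hbc ha hc
  have c3 : ∀ a b c : Fin n, a ≤ b → b ≤ c → a ∈ T3 → c ∈ T3 → b ∈ T3 :=
    fun a b c hab hbc ha hc => hσ ⟨r3, hr3⟩ a b c hab hbc ha hc
  have mem_iff : ∀ (r : Fin m) (j : Fin n), σ.symm j ∈ ({p | M r (σ p) = true} : Set (Fin n)) ↔ j ∈ rowSet M r := by
    intro r j
    simp [rowSet, Set.mem_setOf_eq, Equiv.apply_symm_apply]
  have t12 : (T1 ∩ T2).Nonempty := by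
    obtain ⟨j, hj1, hj2⟩ := hi12
    exact ⟨σ.symm j, (mem_iff r1 j).2 hj1, (mem_iff r2 j).2 hj2⟩
  have t13 : (T1 ∩ T3).Nonempty := by
    obtain ⟨j, hj1, hj3⟩ := hi13
    exact ⟨σ.symm j, (mem_iff r1 j).2 hj1, (mem_iff r3 j).2 hj3⟩
  have t23 : (T2 ∩ T3).Nonempty := by
    obtain ⟨j, hj2, hj3⟩ := hi23
    exact ⟨σ.symm j, (mem_iff r2 j).2 hj2, (mem_iff r3 j).2 hj3⟩
  obtain ⟨⟨w, ⟨hw1, hw2⟩, hw3⟩, hsub⟩ := helly3 c1 c2 c3 t12 t13 t23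
  rcases hviol with hempty | ⟨hn1, hn2, hn3⟩
  · have : σ w ∈ rowSet M r1 ∩ rowSet M r2 ∩ rowSet M r3 := ⟨⟨hw1, hw2⟩, hw3⟩
    rw [hempty] at this
    exact this
  · rcases hsub with h | h | h
    · refine hn1 fun j hj => ?_
      rcases h ((mem_iff r1 j).2 hj) with hm | hm
      · exact Or.inl ((mem_iff r2 j).1 hm)
      · exact Or.inr ((mem_iff r3 j).1 hm)
    · refine hn2 fun j hj => ?_
      rcases h ((mem_iff r2 j).2 hj) with hm | hm
      · exact Or.inl ((mem_iff r1 j).1 hm)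
      · exact Or.inr ((mem_iff r3 j).1 hm)
    · refine hn3 fun j hj => ?_
      rcases h ((mem_iff r3 j).2 hj) with hm | hm
      · exact Or.inl ((mem_iff r1 j).1 hm)
      · exact Or.inr ((mem_iff r2 j).1 hm)
end

section
/- Let M be a binary matrix, let c_p and c_q be two columns of M, and let C = {v_1, v_2, v_3, v_4} be an induced cycle of length 4 in the induced subgraph G[vert(c_p) ∪ vert(c_q)] of the derived graph G(M), with corresponding rows r_1, r_2, r_3, r_4. Then every set D of rows of M for which M \ D has the consecutive ones property contains at least one of r_1, r_2, r_3, r_4. -/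
/-- Four "convex" sets in a linear order cannot realize an induced 4-cycle
(version with `a ≤ b` assumed). -/
lemma c4_intervals_aux {α : Type*} [LinearOrder α] (S1 S2 S3 S4 : Set α)
    (hc1 : ∀ x y z : α, x ≤ y → y ≤ z → x ∈ S1 → z ∈ S1 → y ∈ S1)
    (hc2 : ∀ x y z : α, x ≤ y → y ≤ z → x ∈ S2 → z ∈ S2 → y ∈ S2)
    (hc3 : ∀ x y z : α, x ≤ y → y ≤ z → x ∈ S3 → z ∈ S3 → y ∈ S3)
    (hc4 : ∀ x y z : α, x ≤ y → y ≤ z → x ∈ S4 → z ∈ S4 → y ∈ S4)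
    (a b c d : α) (hab : a ≤ b)
    (ha1 : a ∈ S1) (ha2 : a ∈ S2) (hb2 : b ∈ S2) (hb3 : b ∈ S3)
    (hc3' : c ∈ S3) (hc4' : c ∈ S4) (hd4 : d ∈ S4) (hd1 : d ∈ S1)
    (h13 : ∀ x, x ∈ S1 → x ∈ S3 → False)
    (h24 : ∀ x, x ∈ S2 → x ∈ S4 → False) : False := by
  rcases le_or_gt a (max c d) with hahi | hhia
  · rcases le_or_gt (min c d) b with hlob | hblo
    · -- overlap: x = max a (min c d)
      set x := max a (min c d) with hx
      have hx2 : x ∈ S2 := hc2 a x b (le_max_left _ _) (max_le hab hlob) ha2 hb2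
      have hlo4 : min c d ∈ S4 := by
        rcases min_choice c d with h | h <;> rw [h] <;> assumption
      have hhi4 : max c d ∈ S4 := by
        rcases max_choice c d with h | h <;> rw [h] <;> assumption
      have hx4 : x ∈ S4 :=
        hc4 (min c d) x (max c d) (le_max_right _ _)
          (max_le hahi (le_trans (min_le_left _ _) (le_max_left _ _))) hlo4 hhi4
      exact h24 x hx2 hx4
    · -- b < min c d, so a ≤ b < d, hence b ∈ S1
      have hbd : b ≤ d := le_of_lt (lt_of_lt_of_le hblo (min_le_right _ _))
      exact h13 b (hc1 a b d hab hbd ha1 hd1) hb3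
  · -- max c d < a, so c < a ≤ b, hence a ∈ S3
    have hca : c ≤ a := le_of_lt (lt_of_le_of_lt (le_max_left _ _) hhia)
    exact h13 a ha1 (hc3 c a b hca hab hc3' hb3)

/-- Branching rule 2: If `{v_1, v_2, v_3, v_4}` is an induced
cycle of length 4 in `G[vert(c_p) ∪ vert(c_q)]`, then every row-deletion set
`D` giving COP contains one of the four corresponding rows. -/
theorem stmt15 {m n : ℕ} (M : Fin m → Fin n → Bool) (p q : Fin n)
    (v1 v2 v3 v4 : Fin m)
    (hne : v1 ≠ v2 ∧ v1 ≠ v3 ∧ v1 ≠ v4 ∧ v2 ≠ v3 ∧ v2 ≠ v4 ∧ v3 ≠ v4)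
    (hmem : v1 ∈ vert M p ∪ vert M q ∧ v2 ∈ vert M p ∪ vert M q ∧
            v3 ∈ vert M p ∪ vert M q ∧ v4 ∈ vert M p ∪ vert M q)
    (e12 : (derivedGraph M).Adj v1 v2) (e23 : (derivedGraph M).Adj v2 v3)
    (e34 : (derivedGraph M).Adj v3 v4) (e41 : (derivedGraph M).Adj v4 v1)
    (n13 : ¬ (derivedGraph M).Adj v1 v3) (n24 : ¬ (derivedGraph M).Adj v2 v4)
    (D : Set (Fin m)) (hD : HasCOP (delRows M D)) :
    v1 ∈ D ∨ v2 ∈ D ∨ v3 ∈ D ∨ v4 ∈ D := by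
  by_contra hcon
  push_neg at hcon
  obtain ⟨h1, h2, h3, h4⟩ := hcon
  obtain ⟨σ, hσ⟩ := hD
  -- convex column-position sets for each surviving row
  set S : Fin m → Set (Fin n) := fun v => {t | M v (σ t) = true} with hS
  have hconv : ∀ (v : Fin m) (hv : v ∉ D),
      ∀ x y z : Fin n, x ≤ y → y ≤ z → x ∈ S v → z ∈ S v → y ∈ S v := by
    intro v hv x y z hxy hyz hx hz
    exact hσ ⟨v, hv⟩ x y z hxy hyz hx hz
  -- common points from edges
  have getpt : ∀ u w : Fin m, (derivedGraph M).Adj u w → ∃ t, t ∈ S u ∧ t ∈ S w := by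
    rintro u w ⟨-, k, hk1, hk2⟩
    refine ⟨σ.symm k, ?_, ?_⟩ <;> simp [hS, hk1, hk2]
  obtain ⟨a, ha1, ha2⟩ := getpt _ _ e12
  obtain ⟨b, hb2, hb3⟩ := getpt _ _ e23
  obtain ⟨c, hc3, hc4⟩ := getpt _ _ e34
  obtain ⟨d, hd4, hd1⟩ := getpt _ _ e41
  have h13 : ∀ x, x ∈ S v1 → x ∈ S v3 → False := by
    intro x hx1 hx3
    exact n13 ⟨hne.2.1, σ x, hx1, hx3⟩
  have h24 : ∀ x, x ∈ S v2 → x ∈ S v4 → False := by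
    intro x hx2 hx4
    exact n24 ⟨hne.2.2.2.2.1, σ x, hx2, hx4⟩
  rcases le_total a b with hab | hba
  · exact c4_intervals_aux (S v1) (S v2) (S v3) (S v4)
      (hconv v1 h1) (hconv v2 h2) (hconv v3 h3) (hconv v4 h4)
      a b c d hab ha1 ha2 hb2 hb3 hc3 hc4 hd4 hd1 h13 h24
  · exact c4_intervals_aux (S v3) (S v2) (S v1) (S v4)
      (hconv v3 h3) (hconv v2 h2) (hconv v1 h1) (hconv v4 h4)
      b a d c hba hb3 hb2 ha2 ha1 hd1 hd4 hc4 hc3 (fun x p q => h13 x q p) h24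
end

section
/- Let M be a binary matrix such that for every three pairwise intersecting sets S_a, S_b, S_c in S(M), both S_a ∩ S_b ∩ S_c ≠ ∅ and one of the three sets is contained in the union of the other two. Let Q be a maximal clique of the derived graph G(M) such that no column c_l satisfies vert(c_l) = Q, and let Q' be a subset of Q that is minimal with the property that no column c of M satisfies Q' ⊆ vert(c). Let v_1, v_2, v_3 be any three distinct vertices in Q', with corresponding rows r_1, r_2, r_3. Then every set D of rows of M for which M \ D has the consecutive ones property contains at least one of r_1, r_2, r_3. -/
/-- Branching rule 3: Under the triple condition, if `Q` is a
maximal clique of `G(M)` equal to no `vert(c_l)`, and `Q'` is a subset of `Q`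
minimal with the property of being contained in no `vert(c)`, then for any
three distinct vertices of `Q'`, every row-deletion set `D` giving COP
contains one of the three corresponding rows. -/
theorem stmt17 {m n : ℕ} (M : Fin m → Fin n → Bool)
    (hH : ∀ ra rb rc : Fin m,
      (rowSet M ra ∩ rowSet M rb).Nonempty →
      (rowSet M ra ∩ rowSet M rc).Nonempty →
      (rowSet M rb ∩ rowSet M rc).Nonempty →
      (rowSet M ra ∩ rowSet M rb ∩ rowSet M rc).Nonempty ∧
      (rowSet M ra ⊆ rowSet M rb ∪ rowSet M rc ∨
       rowSet M rb ⊆ rowSet M ra ∪ rowSet M rc ∨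
       rowSet M rc ⊆ rowSet M ra ∪ rowSet M rb))
    (Q : Set (Fin m)) (hQ : IsMaximalClique (derivedGraph M) Q)
    (hnocol : ¬ ∃ k : Fin n, vert M k = Q)
    (Q' : Set (Fin m)) (hQ'sub : Q' ⊆ Q)
    (hQ'prop : ¬ ∃ k : Fin n, Q' ⊆ vert M k)
    (hQ'min : ∀ Q'' : Set (Fin m), Q'' ⊂ Q' → ∃ k : Fin n, Q'' ⊆ vert M k)
    (v1 v2 v3 : Fin m) (h1 : v1 ∈ Q') (h2 : v2 ∈ Q') (h3 : v3 ∈ Q')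
    (h12 : v1 ≠ v2) (h13 : v1 ≠ v3) (h23 : v2 ≠ v3)
    (D : Set (Fin m)) (hD : HasCOP (delRows M D)) :
    v1 ∈ D ∨ v2 ∈ D ∨ v3 ∈ D := by
  by_contra hcon
  push_neg at hcon
  obtain ⟨hv1, hv2, hv3⟩ := hcon
  obtain ⟨k1, hk1⟩ := hQ'min (Q' \ {v1}) (Set.sdiff_singleton_ssubset.mpr h1)
  obtain ⟨k2, hk2⟩ := hQ'min (Q' \ {v2}) (Set.sdiff_singleton_ssubset.mpr h2)
  obtain ⟨k3, hk3⟩ := hQ'min (Q' \ {v3}) (Set.sdiff_singleton_ssubset.mpr h3)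
  -- vᵢ is not in vert(kᵢ)
  have hnot : ∀ (v : Fin m) (k : Fin n), v ∈ Q' → (Q' \ {v}) ⊆ vert M k →
      M v k ≠ true := by
    intro v k hv hk hvk
    apply hQ'prop
    refine ⟨k, fun x hx => ?_⟩
    by_cases hxv : x = v
    · subst hxv; exact hvk
    · exact hk ⟨hx, hxv⟩
  have f1 : M v1 k1 ≠ true := hnot v1 k1 h1 hk1
  have f2 : M v2 k2 ≠ true := hnot v2 k2 h2 hk2
  have f3 : M v3 k3 ≠ true := hnot v3 k3 h3 hk3
  -- memberships
  have t12 : M v1 k2 = true := hk2 ⟨h1, h12⟩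
  have t13 : M v1 k3 = true := hk3 ⟨h1, h13⟩
  have t21 : M v2 k1 = true := hk1 ⟨h2, fun h => h12 h.symm⟩
  have t23 : M v2 k3 = true := hk3 ⟨h2, h23⟩
  have t31 : M v3 k1 = true := hk1 ⟨h3, fun h => h13 h.symm⟩
  have t32 : M v3 k2 = true := hk2 ⟨h3, fun h => h23 h.symm⟩
  obtain ⟨σ, hσ⟩ := hD
  have cop : ∀ (i : Fin m), i ∉ D → ∀ a b c : Fin n, a ≤ b → b ≤ c →
      M i (σ a) = true → M i (σ c) = true → M i (σ b) = true := by
    intro i hi a b c hab hbc ha hc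
    exact hσ ⟨i, hi⟩ a b c hab hbc ha hc
  set q1 := σ.symm k1 with hq1
  set q2 := σ.symm k2 with hq2
  set q3 := σ.symm k3 with hq3
  have e1 : σ q1 = k1 := Equiv.apply_symm_apply σ k1
  have e2 : σ q2 = k2 := Equiv.apply_symm_apply σ k2
  have e3 : σ q3 = k3 := Equiv.apply_symm_apply σ k3
  rcases le_total q1 q2 with a12 | a12 <;> rcases le_total q2 q3 with a23 | a23 <;>
    rcases le_total q1 q3 with a13 | a13
  · exact f2 (by rw [← e2]; exact cop v2 hv2 q1 q2 q3 a12 a23 (by rwa [e1]) (by rwa [e3]))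
  · exact f2 (by rw [← e2]; exact cop v2 hv2 q1 q2 q3 a12 a23 (by rwa [e1]) (by rwa [e3]))
  · exact f3 (by rw [← e3]; exact cop v3 hv3 q1 q3 q2 a13 a23 (by rwa [e1]) (by rwa [e2]))
  · exact f1 (by rw [← e1]; exact cop v1 hv1 q3 q1 q2 a13 a12 (by rwa [e3]) (by rwa [e2]))
  · exact f1 (by rw [← e1]; exact cop v1 hv1 q2 q1 q3 a12 a13 (by rwa [e2]) (by rwa [e3]))
  · exact f3 (by rw [← e3]; exact cop v3 hv3 q2 q3 q1 a23 a13 (by rwa [e2]) (by rwa [e1]))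
  · exact f1 (by rw [← e1]; exact cop v1 hv1 q2 q1 q3 a12 a13 (by rwa [e2]) (by rwa [e3]))
  · exact f2 (by rw [← e2]; exact cop v2 hv2 q3 q2 q1 a23 a12 (by rwa [e3]) (by rwa [e1]))
end
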